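/- The following schemas are theorems of the proof system LEL: (R) [x:=a]φ ↔ [y:=a]φ[y/x], provided y does not occur in φ; (KPI) [x⃗:=a⃗](K_{x⃗}α → K_{x⃗}[x⃗:=a⃗]K_{x⃗}α); (ANI) [x:=a](¬p_x → K_x[x:=a]¬p_x). -/

import Mathlib

namespace SimplicialEpistemic

/-! ## Syntax -/

inductive Formula (Ag Xv Pr : Type) : Type
  | atom : Pr → Xv → Formula Ag Xv Pr
  | top : Formula Ag Xv Pr
  | neg : Formula Ag Xv Pr → Formula Ag Xv Pr
  | and : Formula Ag Xv Pr → Formula Ag Xv Pr → Formula Ag Xv Pr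
  | assign : Xv → Ag → Formula Ag Xv Pr → Formula Ag Xv Pr
  | know : Finset Xv → Formula Ag Xv Pr → Formula Ag Xv Pr

namespace Formula

variable {Ag Xv Pr : Type} [DecidableEq Xv]

/-- Free variables of a formula. -/
def FV : Formula Ag Xv Pr → Finset Xv
  | .atom _ x => {x}
  | .top => ∅
  | .neg φ => FV φ
  | .and φ ψ => FV φ ∪ FV ψ
  | .assign x _ φ => FV φ \ {x}
  | .know Xs _ => Xs

/-- Well-formedness: in `K_X α`, the formula `α` must have no free variables.
The language `L` consists of the well-formed formulas. -/
def Wf : Formula Ag Xv Pr → Prop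
  | .atom _ _ => True
  | .top => True
  | .neg φ => Wf φ
  | .and φ ψ => Wf φ ∧ Wf ψ
  | .assign _ _ φ => Wf φ
  | .know _ α => Wf α ∧ FV α = ∅

/-- A sentence is a well-formed formula with no free variables. -/
def Sent (φ : Formula Ag Xv Pr) : Prop := Wf φ ∧ FV φ = ∅

/-- Implication `φ → ψ`, defined as `¬(φ ∧ ¬ψ)`. -/
def impl (φ ψ : Formula Ag Xv Pr) : Formula Ag Xv Pr := .neg (.and φ (.neg ψ))

/-- Biconditional `φ ↔ ψ`. -/
def fiff (φ ψ : Formula Ag Xv Pr) : Formula Ag Xv Pr := .and (impl φ ψ) (impl ψ φ)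

/-- Disjunction `φ ∨ ψ`, defined as `¬(¬φ ∧ ¬ψ)`. -/
def fdisj (φ ψ : Formula Ag Xv Pr) : Formula Ag Xv Pr := .neg (.and (.neg φ) (.neg ψ))

/-- Falsum `⊥ := ¬⊤`. -/
def fbot : Formula Ag Xv Pr := .neg .top

/-- The dual assignment operator `⟨x:=a⟩φ := ¬[x:=a]¬φ`. -/
def dia (x : Xv) (a : Ag) (φ : Formula Ag Xv Pr) : Formula Ag Xv Pr :=
  .neg (.assign x a (.neg φ))

/-- Finite conjunction of a list of formulas. -/
def bigAnd : List (Formula Ag Xv Pr) → Formula Ag Xv Pr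
  | [] => .top
  | φ :: l => .and φ (bigAnd l)

/-- Iterated assignment `[x⃗:=a⃗]φ`. -/
def assigns : List Xv → List Ag → Formula Ag Xv Pr → Formula Ag Xv Pr
  | x :: xs, a :: as, φ => .assign x a (assigns xs as φ)
  | _, _, φ => φ

/-- Substitution `φ[y/x]` of `y` for all free occurrences of `x` in `φ`. -/
def subst (x y : Xv) : Formula Ag Xv Pr → Formula Ag Xv Pr
  | .atom p z => .atom p (if z = x then y else z)
  | .top => .top
  | .neg φ => .neg (subst x y φ)
  | .and φ ψ => .and (subst x y φ) (subst x y ψ)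
  | .assign z a φ => if z = x then .assign z a φ else .assign z a (subst x y φ)
  | .know Xs α => .know (Xs.image fun z => if z = x then y else z) α

/-- Admissibility of `φ[y/x]`: `x` has no free occurrence in `φ` within the scope
of `[y:=b]` for any `b`. -/
def Adm (x y : Xv) : Formula Ag Xv Pr → Prop
  | .atom _ _ => True
  | .top => True
  | .neg φ => Adm x y φ
  | .and φ ψ => Adm x y φ ∧ Adm x y ψ
  | .assign z _ φ => z = x ∨ x ∉ FV φ ∨ (z ≠ y ∧ Adm x y φ)
  | .know _ _ => True

/-- `occurs y φ`: the variable `y` occurs (free or bound) in `φ`. -/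
def occurs (y : Xv) : Formula Ag Xv Pr → Prop
  | .atom _ z => z = y
  | .top => False
  | .neg φ => occurs y φ
  | .and φ ψ => occurs y φ ∨ occurs y ψ
  | .assign z _ φ => z = y ∨ occurs y φ
  | .know Xs α => y ∈ Xs ∨ occurs y α

/-- Propositional evaluation, treating atoms, assignment formulas and knowledge
formulas as propositional atoms. -/
def propEval (v : Formula Ag Xv Pr → Bool) : Formula Ag Xv Pr → Bool
  | .atom p x => v (.atom p x)
  | .top => true
  | .neg φ => !(propEval v φ)
  | .and φ ψ => propEval v φ && propEval v ψ
  | .assign x a φ => v (.assign x a φ)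
  | .know Xs α => v (.know Xs α)

/-- `φ` is a propositional tautology. -/
def Tautology (φ : Formula Ag Xv Pr) : Prop := ∀ v, propEval v φ = true

end Formula

/-! ## Simplicial models and their semantics -/

structure SimpModel (Ag Pr : Type) : Type 1 where
  V : Type
  faces : Set (Set V)
  χ : V → Ag
  ℓ : Pr → Set V

namespace SimpModel

variable {Ag Pr : Type}

/-- The facets: faces contained in no other face. -/
def facets (C : SimpModel Ag Pr) : Set (Set C.V) :=
  {F | F ∈ C.faces ∧ ∀ G ∈ C.faces, F ⊆ G → F = G}

/-- The conditions for being a genuine simplicial model. -/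
def IsModel (C : SimpModel Ag Pr) : Prop :=
  Nonempty C.V ∧ (∅ : Set C.V) ∉ C.faces ∧
    (∀ Y F : Set C.V, Y.Nonempty → Y ⊆ F → F ∈ C.faces → Y ∈ C.faces) ∧
    (∀ v : C.V, {v} ∈ C.faces) ∧
    (∀ F ∈ C.faces, Set.InjOn C.χ F)

end SimpModel

/-! ## First-order Kripke models and their semantics -/

structure KModel (Ag Pr : Type) : Type 1 where
  W : Type
  δ : W → Set Ag
  R : Ag → W → W → Prop
  ρ : Pr → W → Set Ag

namespace KModel

variable {Ag Pr : Type}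

/-- The conditions for being a genuine first-order Kripke model. -/
def IsModel (M : KModel Ag Pr) : Prop :=
  Nonempty M.W ∧ (∀ w : M.W, (M.δ w).Nonempty) ∧
    (∀ (a : Ag) (w v : M.W), M.R a w v → a ∈ M.δ w) ∧
    (∀ (p : Pr) (w : M.W), M.ρ p w ⊆ M.δ w)

end KModel

variable {Ag Xv Pr : Type}

/-- Simplicial satisfaction `C, F, σ ⊩ φ`. -/
def SSat [DecidableEq Xv] (C : SimpModel Ag Pr) :
    Formula Ag Xv Pr → Set C.V → (Xv → Ag) → Prop
  | .atom p x, F, σ => σ x ∈ C.χ '' (F ∩ C.ℓ p)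
  | .top, _, _ => True
  | .neg φ, F, σ => ¬ SSat C φ F σ
  | .and φ ψ, F, σ => SSat C φ F σ ∧ SSat C ψ F σ
  | .assign x a φ, F, σ => a ∈ C.χ '' F → SSat C φ F (Function.update σ x a)
  | .know Xs α, F, σ =>
      ∀ G ∈ C.facets, (∀ x ∈ Xs, σ x ∈ C.χ '' (F ∩ G)) → SSat C α G σ

/-- Kripke satisfaction `M, w, σ ⊨ φ`. -/
def KSat [DecidableEq Xv] (M : KModel Ag Pr) :
    Formula Ag Xv Pr → M.W → (Xv → Ag) → Prop
  | .atom p x, w, σ => σ x ∈ M.ρ p w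
  | .top, _, _ => True
  | .neg φ, w, σ => ¬ KSat M φ w σ
  | .and φ ψ, w, σ => KSat M φ w σ ∧ KSat M ψ w σ
  | .assign x a φ, w, σ => a ∈ M.δ w → KSat M φ w (Function.update σ x a)
  | .know Xs α, w, σ => ∀ v : M.W, (∀ x ∈ Xs, M.R (σ x) w v) → KSat M α v σ

/-! ## Bisimulations -/

/-- Bisimulation between simplicial models. -/
def IsSBisim (C D : SimpModel Ag Pr) (Z : Set (Set C.V × Set D.V)) : Prop :=
  (∀ q ∈ Z, q.1 ∈ C.facets ∧ q.2 ∈ D.facets) ∧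
    ∀ F G, (F, G) ∈ Z →
      (C.χ '' F = D.χ '' G ∧ ∀ p : Pr, C.χ '' (F ∩ C.ℓ p) = D.χ '' (G ∩ D.ℓ p)) ∧
      (∀ (As : Set Ag) (F' : Set C.V), F' ∈ C.facets → As ⊆ C.χ '' (F ∩ F') →
        ∃ G' ∈ D.facets, As ⊆ D.χ '' (G ∩ G') ∧ (F', G') ∈ Z) ∧
      (∀ (As : Set Ag) (G' : Set D.V), G' ∈ D.facets → As ⊆ D.χ '' (G ∩ G') →
        ∃ F' ∈ C.facets, As ⊆ C.χ '' (F ∩ F') ∧ (F', G') ∈ Z)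

/-- Bisimulation between first-order Kripke models. -/
def IsKBisim (M N : KModel Ag Pr) (Z : Set (M.W × N.W)) : Prop :=
  ∀ w v, (w, v) ∈ Z →
    (M.δ w = N.δ v ∧ ∀ p : Pr, M.ρ p w = N.ρ p v) ∧
    (∀ (As : Set Ag) (w' : M.W), (∀ a ∈ As, M.R a w w') →
      ∃ v' : N.W, (∀ a ∈ As, N.R a v v') ∧ (w', v') ∈ Z) ∧
    (∀ (As : Set Ag) (v' : N.W), (∀ a ∈ As, N.R a v v') →
      ∃ w' : M.W, (∀ a ∈ As, M.R a w w') ∧ (w', v') ∈ Z)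

/-! ## Local epistemic models -/

/-- (Local S5): the restriction of `R_a` to `{w | a ∈ δ(w)}` is an equivalence relation. -/
def LocalS5 (M : KModel Ag Pr) : Prop :=
  ∀ a : Ag, Equivalence (fun w v : {w : M.W // a ∈ M.δ w} => M.R a w.1 v.1)

/-- (Individually Increasing Domain). -/
def IndInc (M : KModel Ag Pr) : Prop :=
  ∀ (a : Ag) (w v : M.W), a ∈ M.δ w → M.R a w v → a ∈ M.δ v

/-- (Local Predicates). -/
def LocalPred (M : KModel Ag Pr) : Prop :=
  ∀ (p : Pr) (a : Ag) (w v : M.W), a ∈ M.ρ p w → M.R a w v → a ∈ M.ρ p v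

/-- (Collectively Decreasing Domain). -/
def CollDec (M : KModel Ag Pr) : Prop :=
  ∀ w v : M.W, (∀ a ∈ M.δ w, M.R a w v) → M.δ v ⊆ M.δ w

/-- A local epistemic model. -/
def IsLEM (M : KModel Ag Pr) : Prop :=
  LocalS5 M ∧ IndInc M ∧ LocalPred M ∧ CollDec M

/-- (Properness): `⋂_{a ∈ δ(w)} R_a(w) = {w}` for every `w`. -/
def Proper (M : KModel Ag Pr) : Prop :=
  ∀ w : M.W, {v : M.W | ∀ a ∈ M.δ w, M.R a w v} = {w}

/-! ## Properization -/

/-- `[w]_δ = ⋂_{a ∈ δ(w)} R_a(w)`. -/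
def cell (M : KModel Ag Pr) (w : M.W) : Set M.W := {v | ∀ a ∈ M.δ w, M.R a w v}

/-- The properization `M^pr` of a Kripke model. -/
noncomputable def properize (M : KModel Ag Pr) : KModel Ag Pr where
  W := {S : Set M.W // ∃ w : M.W, S = cell M w}
  δ := fun S => M.δ S.2.choose
  R := fun a S T => ∃ w v : M.W, S.1 = cell M w ∧ T.1 = cell M v ∧ M.R a w v
  ρ := fun p S => M.ρ p S.2.choose

/-! ## The maps LEM and SC -/

/-- `LEM(C)`: the first-order Kripke model associated to a simplicial model. -/
def LEMof (C : SimpModel Ag Pr) : KModel Ag Pr where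
  W := {F : Set C.V // F ∈ C.facets}
  δ := fun F => C.χ '' F.1
  R := fun a F G => a ∈ C.χ '' (F.1 ∩ G.1)
  ρ := fun p F => C.χ '' (F.1 ∩ C.ℓ p)

/-- Vertices of `SC(M)`: pairs `(a, [w]_a)` with `a ∈ δ(w)`, `[w]_a = R_a(w)`. -/
abbrev SCVert (M : KModel Ag Pr) : Type :=
  {u : Ag × Set M.W // ∃ w : M.W, u.1 ∈ M.δ w ∧ u.2 = {v : M.W | M.R u.1 w v}}

/-- `F^M_w = {(a, [w]_a) | a ∈ δ(w)}`. -/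
def SCface (M : KModel Ag Pr) (w : M.W) : Set (SCVert M) :=
  {u | u.1.1 ∈ M.δ w ∧ u.1.2 = {v : M.W | M.R u.1.1 w v}}

/-- `SC(M)`: the simplicial model associated to a Kripke model. -/
def SCof (M : KModel Ag Pr) : SimpModel Ag Pr where
  V := SCVert M
  faces := {F : Set (SCVert M) | F.Nonempty ∧ ∃ w : M.W, F ⊆ SCface M w}
  χ := fun u => u.1.1
  ℓ := fun p => {u | ∃ w : M.W, u.1.1 ∈ M.ρ p w ∧ u.1.2 = {v : M.W | M.R u.1.1 w v}}

/-! ## Isomorphisms -/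

/-- Isomorphism of first-order Kripke models. -/
structure KIso (M N : KModel Ag Pr) where
  toEquiv : M.W ≃ N.W
  δ_eq : ∀ w : M.W, N.δ (toEquiv w) = M.δ w
  R_iff : ∀ (a : Ag) (w v : M.W), N.R a (toEquiv w) (toEquiv v) ↔ M.R a w v
  ρ_eq : ∀ (p : Pr) (w : M.W), N.ρ p (toEquiv w) = M.ρ p w

/-- Isomorphism of simplicial models. -/
structure SIso (C D : SimpModel Ag Pr) where
  toEquiv : C.V ≃ D.V
  face_iff : ∀ F : Set C.V, F ∈ C.faces ↔ (toEquiv '' F) ∈ D.faces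
  χ_eq : ∀ v : C.V, D.χ (toEquiv v) = C.χ v
  ℓ_iff : ∀ (p : Pr) (v : C.V), toEquiv v ∈ D.ℓ p ↔ v ∈ C.ℓ p

/-! ## The proof system LEL -/

/-- The axiom system `LEL` (over the well-formed fragment of the language). -/
inductive LEL [DecidableEq Xv] : Formula Ag Xv Pr → Prop
  | taut {φ} : Formula.Wf φ → Formula.Tautology φ → LEL φ
  | kk {Xs : Finset Xv} {α β} : Formula.Sent α → Formula.Sent β →
      LEL (Formula.impl (.know Xs (Formula.impl α β))
        (Formula.impl (.know Xs α) (.know Xs β)))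
  | mono {Xs Ys : Finset Xv} {α} : Xs ⊆ Ys → Formula.Sent α →
      LEL (Formula.impl (.know Xs α) (.know Ys α))
  | kasgn {x : Xv} {a : Ag} {φ ψ} : Formula.Wf φ → Formula.Wf ψ →
      LEL (Formula.impl (.assign x a (Formula.impl φ ψ))
        (Formula.impl (.assign x a φ) (.assign x a ψ)))
  | det {x : Xv} {a : Ag} {φ} : Formula.Wf φ →
      LEL (Formula.impl (Formula.dia x a φ) (.assign x a φ))
  | tr {x : Xv} {a : Ag} {φ} : Formula.Wf φ → x ∉ Formula.FV φ →
      LEL (Formula.impl φ (.assign x a φ))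
  | sub {x y : Xv} {a : Ag} {φ} : Formula.Wf φ → Formula.Adm x y φ →
      LEL (.assign y a (Formula.impl (.assign x a φ) (Formula.subst x y φ)))
  | com {x y : Xv} {a b : Ag} {φ} : Formula.Wf φ → x ≠ y →
      LEL (Formula.impl (.assign x a (.assign y b φ)) (.assign y b (.assign x a φ)))
  | ui {x : Xv} {φ} (l : List Ag) : Formula.Wf φ → l.Nodup → (∀ a : Ag, a ∈ l) →
      LEL (Formula.impl (Formula.bigAnd (l.map fun a => .assign x a φ)) φ)
  | tK {Xs : Finset Xv} {α} : Formula.Sent α → LEL (Formula.impl (.know Xs α) α)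
  | kni {xs : List Xv} {as : List Ag} {α} :
      Formula.Sent α → xs.Nodup → xs.length = as.length →
      LEL (Formula.assigns xs as (Formula.impl (.neg (.know xs.toFinset α))
        (.know xs.toFinset (Formula.assigns xs as (.neg (.know xs.toFinset α))))))
  | epi {x : Xv} {a : Ag} : LEL (.assign x a (.know {x} (Formula.dia x a .top)))
  | api {x : Xv} {a : Ag} {p : Pr} :
      LEL (.assign x a (Formula.impl (.atom p x) (.know {x} (.assign x a (.atom p x)))))
  | eni {xs : List Xv} {as : List Ag} {z : Xv} (l : List Ag) :
      xs.Nodup → xs.length = as.length → l.Nodup → (∀ b : Ag, b ∈ l ↔ b ∉ as) →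
      LEL (Formula.assigns xs as
        (Formula.impl (Formula.bigAnd (l.map fun b => .assign z b Formula.fbot))
          (.know xs.toFinset (Formula.bigAnd (l.map fun b => .assign z b Formula.fbot)))))
  | mp {φ ψ} : LEL (Formula.impl φ ψ) → LEL φ → LEL ψ
  | necK {α} : Formula.Sent α → LEL α → LEL (.know ∅ α)
  | necA {x : Xv} {a : Ag} {φ} : LEL φ → LEL (.assign x a φ)

/-- `Γ` is consistent in `LEL`: no finite subset has a provably false conjunction. -/
def Consistent [DecidableEq Xv] (Γ : Set (Formula Ag Xv Pr)) : Prop :=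
  ¬ ∃ l : List (Formula Ag Xv Pr), (∀ φ ∈ l, φ ∈ Γ) ∧ LEL (.neg (Formula.bigAnd l))

end SimplicialEpistemic
set_option linter.unusedSectionVars false

namespace SimplicialEpistemic

namespace Formula

variable {Ag Xv Pr : Type} [DecidableEq Xv]

/-! ### Simp lemmas for `Wf`, `FV`, `propEval`, `occurs` -/

@[simp] theorem wf_atom {p : Pr} {x : Xv} : (atom p x : Formula Ag Xv Pr).Wf := trivial
@[simp] theorem wf_top : (top : Formula Ag Xv Pr).Wf := trivial
@[simp] theorem wf_neg {φ : Formula Ag Xv Pr} : (neg φ).Wf ↔ φ.Wf := Iff.rfl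
@[simp] theorem wf_and {φ ψ : Formula Ag Xv Pr} : (Formula.and φ ψ).Wf ↔ φ.Wf ∧ ψ.Wf := Iff.rfl
@[simp] theorem wf_assign {x : Xv} {a : Ag} {φ : Formula Ag Xv Pr} :
    (assign x a φ).Wf ↔ φ.Wf := Iff.rfl
@[simp] theorem wf_know {X : Finset Xv} {α : Formula Ag Xv Pr} :
    (know X α).Wf ↔ α.Wf ∧ α.FV = ∅ := Iff.rfl
@[simp] theorem wf_impl {φ ψ : Formula Ag Xv Pr} : (impl φ ψ).Wf ↔ φ.Wf ∧ ψ.Wf := Iff.rfl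
@[simp] theorem wf_fiff {φ ψ : Formula Ag Xv Pr} :
    (fiff φ ψ).Wf ↔ (φ.Wf ∧ ψ.Wf) ∧ ψ.Wf ∧ φ.Wf := Iff.rfl

@[simp] theorem fv_atom {p : Pr} {x : Xv} : (atom p x : Formula Ag Xv Pr).FV = {x} := rfl
@[simp] theorem fv_top : (top : Formula Ag Xv Pr).FV = ∅ := rfl
@[simp] theorem fv_neg {φ : Formula Ag Xv Pr} : (neg φ).FV = φ.FV := rfl
@[simp] theorem fv_and {φ ψ : Formula Ag Xv Pr} : (Formula.and φ ψ).FV = φ.FV ∪ ψ.FV := rfl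
@[simp] theorem fv_assign {x : Xv} {a : Ag} {φ : Formula Ag Xv Pr} :
    (assign x a φ).FV = φ.FV \ {x} := rfl
@[simp] theorem fv_know {X : Finset Xv} {α : Formula Ag Xv Pr} : (know X α).FV = X := rfl
@[simp] theorem fv_impl {φ ψ : Formula Ag Xv Pr} : (impl φ ψ).FV = φ.FV ∪ ψ.FV := rfl

@[simp] theorem pe_neg (v) (φ : Formula Ag Xv Pr) : propEval v (neg φ) = !propEval v φ := rfl
@[simp] theorem pe_and (v) (φ ψ : Formula Ag Xv Pr) :
    propEval v (Formula.and φ ψ) = (propEval v φ && propEval v ψ) := rfl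
@[simp] theorem pe_top (v) : propEval v (top : Formula Ag Xv Pr) = true := rfl
@[simp] theorem pe_impl (v) (φ ψ : Formula Ag Xv Pr) :
    propEval v (impl φ ψ) = (!propEval v φ || propEval v ψ) := by
  simp [impl]

@[simp] theorem occurs_atom {p : Pr} {z y : Xv} :
    occurs y (atom p z : Formula Ag Xv Pr) ↔ z = y := Iff.rfl
@[simp] theorem occurs_top {y : Xv} : ¬ occurs y (top : Formula Ag Xv Pr) := fun h => h
@[simp] theorem occurs_neg {y : Xv} {φ : Formula Ag Xv Pr} :
    occurs y (neg φ) ↔ occurs y φ := Iff.rfl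
@[simp] theorem occurs_and {y : Xv} {φ ψ : Formula Ag Xv Pr} :
    occurs y (Formula.and φ ψ) ↔ occurs y φ ∨ occurs y ψ := Iff.rfl
@[simp] theorem occurs_assign {y z : Xv} {a : Ag} {φ : Formula Ag Xv Pr} :
    occurs y (assign z a φ) ↔ z = y ∨ occurs y φ := Iff.rfl
@[simp] theorem occurs_know {y : Xv} {X : Finset Xv} {α : Formula Ag Xv Pr} :
    occurs y (know X α) ↔ y ∈ X ∨ occurs y α := Iff.rfl

theorem not_occurs_fv {y : Xv} : ∀ {φ : Formula Ag Xv Pr}, ¬ occurs y φ → y ∉ φ.FV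
  | atom p z, h => by simp at h ⊢; exact fun hz => h hz.symm
  | top, _ => by simp
  | neg φ, h => not_occurs_fv (φ := φ) h
  | Formula.and φ ψ, h => by
      simp at h ⊢
      exact ⟨not_occurs_fv h.1, not_occurs_fv h.2⟩
  | assign z a φ, h => by
      simp at h ⊢
      intro hy
      exact absurd (not_occurs_fv h.2 hy) (fun hh => hh)
  | know X α, h => by simp at h ⊢; exact h.1

/-! ### Substitution lemmas -/

theorem subst_self {x : Xv} : ∀ φ : Formula Ag Xv Pr, subst x x φ = φ
  | atom p z => by by_cases h : z = x <;> simp [subst, h]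
  | top => rfl
  | neg φ => by simp [subst, subst_self φ]
  | Formula.and φ ψ => by simp [subst, subst_self φ, subst_self ψ]
  | assign z a φ => by by_cases h : z = x <;> simp [subst, h, subst_self φ]
  | know X α => by
      have : (fun z : Xv => if z = x then x else z) = id := by
        funext z; by_cases h : z = x <;> simp [h]
      simp [subst, this]

theorem adm_refl {x : Xv} : ∀ φ : Formula Ag Xv Pr, Adm x x φ
  | atom _ _ => trivial
  | top => trivial
  | neg φ => adm_refl φ
  | Formula.and φ ψ => ⟨adm_refl φ, adm_refl ψ⟩
  | assign z a φ => by
      by_cases h : z = x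
      · exact Or.inl h
      · exact Or.inr (Or.inr ⟨h, adm_refl φ⟩)
  | know _ _ => trivial

theorem wf_subst {x y : Xv} : ∀ {φ : Formula Ag Xv Pr}, φ.Wf → (subst x y φ).Wf
  | atom _ _, _ => trivial
  | top, _ => trivial
  | neg φ, h => wf_subst (φ := φ) h
  | Formula.and φ ψ, h => ⟨wf_subst h.1, wf_subst h.2⟩
  | assign z a φ, h => by
      by_cases hz : z = x <;> simp [subst, hz] <;> [exact h; exact wf_subst h]
  | know X α, h => h

theorem adm_of_not_occurs {x y : Xv} :
    ∀ {φ : Formula Ag Xv Pr}, ¬ occurs y φ → Adm x y φ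
  | atom _ _, _ => trivial
  | top, _ => trivial
  | neg φ, h => adm_of_not_occurs (φ := φ) h
  | Formula.and φ ψ, h => by
      simp at h
      exact ⟨adm_of_not_occurs h.1, adm_of_not_occurs h.2⟩
  | assign z a φ, h => by
      simp at h
      exact Or.inr (Or.inr ⟨h.1, adm_of_not_occurs h.2⟩)
  | know _ _, _ => trivial

theorem subst_not_occurs {x y : Xv} :
    ∀ {φ : Formula Ag Xv Pr}, ¬ occurs x φ → subst x y φ = φ
  | atom p z, h => by simp at h; simp [subst, h]
  | top, _ => rfl
  | neg φ, h => by simp [subst, subst_not_occurs (φ := φ) h]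
  | Formula.and φ ψ, h => by
      simp at h
      simp [subst, subst_not_occurs h.1, subst_not_occurs h.2]
  | assign z a φ, h => by
      simp at h
      simp [subst, h.1, subst_not_occurs h.2]
  | know X α, h => by
      simp at h
      have : X.image (fun z : Xv => if z = x then y else z) = X := by
        rw [Finset.image_congr (g := id), Finset.image_id]
        intro z hz
        have : z ≠ x := fun hh => h.1 (hh ▸ hz)
        simp [this]
      simp [subst, this]

theorem subst_subst {x y : Xv} :
    ∀ {φ : Formula Ag Xv Pr}, ¬ occurs y φ → subst y x (subst x y φ) = φ
  | atom p z, h => by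
      simp at h
      by_cases hz : z = x <;> simp [subst, hz, h]
  | top, _ => rfl
  | neg φ, h => by simp [subst, subst_subst (φ := φ) h]
  | Formula.and φ ψ, h => by
      simp at h
      simp [subst, subst_subst h.1, subst_subst h.2]
  | assign z a φ, h => by
      simp at h
      by_cases hz : z = x
      · simp [subst, hz, h.1, subst_not_occurs h.2]
      · simp [subst, hz, h.1, subst_subst h.2]
  | know X α, h => by
      simp at h
      simp only [subst, Finset.image_image]
      congr 1
      rw [Finset.image_congr (g := id), Finset.image_id]
      intro z hz
      have hzy : z ≠ y := fun hh => h.1 (hh ▸ hz)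
      by_cases hzx : z = x <;> simp [Function.comp, hzx, hzy]

theorem fv_subst_not_mem {x y : Xv} (hxy : x ≠ y) :
    ∀ {φ : Formula Ag Xv Pr}, x ∉ (subst x y φ).FV
  | atom p z => by by_cases hz : z = x <;> simp [subst, hz, hxy]; exact fun h => hz h.symm
  | top => by simp [subst]
  | neg φ => fv_subst_not_mem hxy (φ := φ)
  | Formula.and φ ψ => by
      simp only [subst, fv_and, Finset.mem_union]
      push_neg
      exact ⟨fv_subst_not_mem hxy, fv_subst_not_mem hxy⟩
  | assign z a φ => by
      by_cases hz : z = x <;> simp [subst, hz]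
      · intro h; exact absurd h (fv_subst_not_mem hxy)
  | know X α => by
      simp only [subst, fv_know, Finset.mem_image, not_exists]
      rintro z ⟨hz, hzx⟩
      by_cases h : z = x
      · simp [h] at hzx; exact hxy hzx.symm
      · simp [h] at hzx

theorem adm_subst {x y : Xv} :
    ∀ {φ : Formula Ag Xv Pr}, ¬ occurs y φ → Adm y x (subst x y φ)
  | atom _ _, _ => trivial
  | top, _ => trivial
  | neg φ, h => adm_subst (φ := φ) h
  | Formula.and φ ψ, h => by
      simp at h
      exact ⟨adm_subst h.1, adm_subst h.2⟩
  | assign z a φ, h => by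
      simp at h
      by_cases hz : z = x
      · simp only [subst, if_pos hz]
        exact Or.inr (Or.inl (not_occurs_fv h.2))
      · simp only [subst, if_neg hz]
        exact Or.inr (Or.inr ⟨hz, adm_subst h.2⟩)
  | know _ _, _ => trivial

/-! ### `assigns` lemmas -/

theorem wf_assigns : ∀ (xs : List Xv) (as : List Ag) {φ : Formula Ag Xv Pr},
    (assigns xs as φ).Wf ↔ φ.Wf
  | [], _, _ => Iff.rfl
  | _ :: _, [], _ => Iff.rfl
  | x :: xs, a :: as, φ => wf_assigns xs as

theorem fv_assigns_subset : ∀ (xs : List Xv) (as : List Ag) {φ : Formula Ag Xv Pr},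
    (assigns xs as φ).FV ⊆ φ.FV
  | [], _, _ => subset_rfl
  | _ :: _, [], _ => subset_rfl
  | x :: xs, a :: as, φ =>
      (Finset.sdiff_subset (s := (assigns xs as φ).FV) (t := {x})).trans
        (fv_assigns_subset xs as)

theorem fv_assigns : ∀ (xs : List Xv) (as : List Ag) {φ : Formula Ag Xv Pr},
    xs.length = as.length → (assigns xs as φ).FV = φ.FV \ xs.toFinset
  | [], [], φ, _ => by simp [assigns]
  | x :: xs, a :: as, φ, h => by
      have h' : xs.length = as.length := by simpa using h
      show (assigns xs as φ).FV \ {x} = _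
      rw [fv_assigns xs as h']
      ext z
      simp only [Finset.mem_sdiff, Finset.mem_singleton, List.toFinset_cons, Finset.mem_insert]
      tauto

theorem sent_assigns {xs : List Xv} {as : List Ag} {φ : Formula Ag Xv Pr}
    (hlen : xs.length = as.length) (wφ : φ.Wf) (hsub : φ.FV ⊆ xs.toFinset) :
    Sent (assigns xs as φ) :=
  ⟨(wf_assigns xs as).mpr wφ, by
    rw [fv_assigns xs as hlen]
    exact Finset.sdiff_eq_empty_iff_subset.mpr hsub⟩

end Formula

end SimplicialEpistemic

namespace SimplicialEpistemic

open Formula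

variable {Ag Xv Pr : Type} [DecidableEq Xv]

/-! ### Propositional combinators -/

theorem lel_imp_self {φ : Formula Ag Xv Pr} (w : φ.Wf) : LEL (impl φ φ) := by
  refine LEL.taut (by simp [w]) fun v => ?_
  simp only [pe_impl]
  cases propEval v φ <;> rfl

theorem lel_imp_trans {P Q R : Formula Ag Xv Pr} (wP : P.Wf) (wQ : Q.Wf) (wR : R.Wf)
    (h1 : LEL (impl P Q)) (h2 : LEL (impl Q R)) : LEL (impl P R) := by
  have t : LEL (impl (impl P Q) (impl (impl Q R) (impl P R))) := by
    refine LEL.taut (by simp [wP, wQ, wR]) fun v => ?_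
    simp only [pe_impl]
    cases propEval v P <;> cases propEval v Q <;> cases propEval v R <;> rfl
  exact (t.mp h1).mp h2

theorem lel_contra {P Q : Formula Ag Xv Pr} (wP : P.Wf) (wQ : Q.Wf)
    (h : LEL (impl P Q)) : LEL (impl (neg Q) (neg P)) := by
  have t : LEL (impl (impl P Q) (impl (neg Q) (neg P))) := by
    refine LEL.taut (by simp [wP, wQ]) fun v => ?_
    simp only [pe_impl, pe_neg]
    cases propEval v P <;> cases propEval v Q <;> rfl
  exact t.mp h

theorem lel_contra1 {P Q : Formula Ag Xv Pr} (wP : P.Wf) (wQ : Q.Wf)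
    (h : LEL (impl P (neg Q))) : LEL (impl Q (neg P)) := by
  have t : LEL (impl (impl P (neg Q)) (impl Q (neg P))) := by
    refine LEL.taut (by simp [wP, wQ]) fun v => ?_
    simp only [pe_impl, pe_neg]
    cases propEval v P <;> cases propEval v Q <;> rfl
  exact t.mp h

theorem lel_contra2 {P Q : Formula Ag Xv Pr} (wP : P.Wf) (wQ : Q.Wf)
    (h : LEL (impl (neg P) Q)) : LEL (impl (neg Q) P) := by
  have t : LEL (impl (impl (neg P) Q) (impl (neg Q) P)) := by
    refine LEL.taut (by simp [wP, wQ]) fun v => ?_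
    simp only [pe_impl, pe_neg]
    cases propEval v P <;> cases propEval v Q <;> rfl
  exact t.mp h

theorem lel_fiff {P Q : Formula Ag Xv Pr} (wP : P.Wf) (wQ : Q.Wf)
    (h1 : LEL (impl P Q)) (h2 : LEL (impl Q P)) : LEL (fiff P Q) := by
  have t : LEL (impl (impl P Q) (impl (impl Q P) (fiff P Q))) := by
    refine LEL.taut (by simp [wP, wQ]) fun v => ?_
    simp only [pe_impl, fiff, pe_and]
    cases propEval v P <;> cases propEval v Q <;> rfl
  exact (t.mp h1).mp h2

/-! ### Reasoning under assignments -/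

theorem a_distrib {x : Xv} {a : Ag} {P Q : Formula Ag Xv Pr} (wP : P.Wf) (wQ : Q.Wf)
    (h : LEL (Formula.assign x a (impl P Q))) :
    LEL (impl (Formula.assign x a P) (Formula.assign x a Q)) :=
  (LEL.kasgn wP wQ).mp h

theorem a_mp {x : Xv} {a : Ag} {P Q : Formula Ag Xv Pr} (wP : P.Wf) (wQ : Q.Wf)
    (h : LEL (Formula.assign x a (impl P Q))) (h2 : LEL (Formula.assign x a P)) :
    LEL (Formula.assign x a Q) :=
  (a_distrib wP wQ h).mp h2

theorem necAs {φ : Formula Ag Xv Pr} :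
    ∀ (xs : List Xv) (as : List Ag), LEL φ → LEL (assigns xs as φ)
  | [], _, h => h
  | _ :: _, [], h => h
  | x :: xs, a :: as, h => LEL.necA (necAs xs as h)

theorem assigns_distrib : ∀ (xs : List Xv) (as : List Ag) {P Q : Formula Ag Xv Pr},
    P.Wf → Q.Wf →
    LEL (impl (assigns xs as (impl P Q)) (impl (assigns xs as P) (assigns xs as Q)))
  | [], _, P, Q, wP, wQ => by
      show LEL (impl (impl P Q) (impl P Q))
      exact lel_imp_self (by simp [wP, wQ])
  | _ :: _, [], P, Q, wP, wQ => by
      show LEL (impl (impl P Q) (impl P Q))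
      exact lel_imp_self (by simp [wP, wQ])
  | x :: xs, a :: as, P, Q, wP, wQ => by
      have wAP : (assigns xs as P).Wf := (wf_assigns xs as).mpr wP
      have wAQ : (assigns xs as Q).Wf := (wf_assigns xs as).mpr wQ
      have wAPQ : (assigns xs as (impl P Q)).Wf := (wf_assigns xs as).mpr (by simp [wP, wQ])
      have ih := assigns_distrib xs as wP wQ
      have h1 : LEL (Formula.assign x a
          (impl (assigns xs as (impl P Q)) (impl (assigns xs as P) (assigns xs as Q)))) :=
        LEL.necA ih
      have h2 : LEL (impl (Formula.assign x a (assigns xs as (impl P Q)))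
          (Formula.assign x a (impl (assigns xs as P) (assigns xs as Q)))) :=
        a_distrib wAPQ (by simp [wAP, wAQ]) h1
      have h3 : LEL (impl (Formula.assign x a (impl (assigns xs as P) (assigns xs as Q)))
          (impl (Formula.assign x a (assigns xs as P)) (Formula.assign x a (assigns xs as Q)))) :=
        LEL.kasgn wAP wAQ
      exact lel_imp_trans (wf_assign.mpr wAPQ) (wf_assign.mpr (wf_impl.mpr ⟨wAP, wAQ⟩))
        (wf_impl.mpr ⟨wf_assign.mpr wAP, wf_assign.mpr wAQ⟩) h2 h3

theorem as_mp {xs : List Xv} {as : List Ag} {P Q : Formula Ag Xv Pr} (wP : P.Wf) (wQ : Q.Wf)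
    (h : LEL (assigns xs as (impl P Q))) (h2 : LEL (assigns xs as P)) :
    LEL (assigns xs as Q) :=
  ((assigns_distrib xs as wP wQ).mp h).mp h2

theorem as_imp_trans {xs : List Xv} {as : List Ag} {P Q R : Formula Ag Xv Pr}
    (wP : P.Wf) (wQ : Q.Wf) (wR : R.Wf)
    (h1 : LEL (assigns xs as (impl P Q))) (h2 : LEL (assigns xs as (impl Q R))) :
    LEL (assigns xs as (impl P R)) := by
  have t : LEL (impl (impl P Q) (impl (impl Q R) (impl P R))) := by
    refine LEL.taut (by simp [wP, wQ, wR]) fun v => ?_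
    simp only [pe_impl]
    cases propEval v P <;> cases propEval v Q <;> cases propEval v R <;> rfl
  exact as_mp (by simp [wQ, wR]) (by simp [wP, wR])
    (as_mp (by simp [wP, wQ]) (by simp [wP, wQ, wR]) (necAs xs as t) h1) h2

theorem as_contra1 {xs : List Xv} {as : List Ag} {P Q : Formula Ag Xv Pr}
    (wP : P.Wf) (wQ : Q.Wf) (h : LEL (assigns xs as (impl P (neg Q)))) :
    LEL (assigns xs as (impl Q (neg P))) := by
  have t : LEL (impl (impl P (neg Q)) (impl Q (neg P))) := by
    refine LEL.taut (by simp [wP, wQ]) fun v => ?_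
    simp only [pe_impl, pe_neg]
    cases propEval v P <;> cases propEval v Q <;> rfl
  exact as_mp (by simp [wP, wQ]) (by simp [wP, wQ]) (necAs xs as t) h

theorem as_contra {xs : List Xv} {as : List Ag} {P Q : Formula Ag Xv Pr}
    (wP : P.Wf) (wQ : Q.Wf) (h : LEL (assigns xs as (impl P Q))) :
    LEL (assigns xs as (impl (neg Q) (neg P))) := by
  have t : LEL (impl (impl P Q) (impl (neg Q) (neg P))) := by
    refine LEL.taut (by simp [wP, wQ]) fun v => ?_
    simp only [pe_impl, pe_neg]
    cases propEval v P <;> cases propEval v Q <;> rfl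
  exact as_mp (by simp [wP, wQ]) (by simp [wP, wQ]) (necAs xs as t) h

/-! ### Knowledge helpers -/

theorem sent_impl {P Q : Formula Ag Xv Pr} (hP : Sent P) (hQ : Sent Q) : Sent (impl P Q) :=
  ⟨by simp [hP.1, hQ.1], by simp [hP.2, hQ.2]⟩

theorem k_imp {X : Finset Xv} {P Q : Formula Ag Xv Pr} (hP : Sent P) (hQ : Sent Q)
    (h : LEL (impl P Q)) : LEL (impl (Formula.know X P) (Formula.know X Q)) := by
  have h0 : LEL (Formula.know (∅ : Finset Xv) (impl P Q)) := LEL.necK (sent_impl hP hQ) h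
  have h1 : LEL (Formula.know X (impl P Q)) :=
    (LEL.mono (Finset.empty_subset X) (sent_impl hP hQ)).mp h0
  exact (LEL.kk hP hQ).mp h1

/-! ### TR lifting and the self-substitution lemma -/

theorem tr_lift : ∀ (xs : List Xv) (as : List Ag) {χ : Formula Ag Xv Pr},
    χ.Wf → (∀ y ∈ xs, y ∉ χ.FV) → LEL (impl χ (assigns xs as χ))
  | [], _, χ, w, _ => lel_imp_self w
  | _ :: _, [], χ, w, _ => lel_imp_self w
  | x :: xs, a :: as, χ, w, h => by
      have wA : (assigns xs as χ).Wf := (wf_assigns xs as).mpr w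
      have ih : LEL (impl χ (assigns xs as χ)) :=
        tr_lift xs as w fun y hy => h y (List.mem_cons_of_mem _ hy)
      have htr : LEL (impl (assigns xs as χ) (Formula.assign x a (assigns xs as χ))) :=
        LEL.tr wA fun hx =>
          h x List.mem_cons_self (fv_assigns_subset xs as hx)
      exact lel_imp_trans w wA wA ih htr

theorem lel_self : ∀ (xs : List Xv) (as : List Ag) {ψ : Formula Ag Xv Pr},
    xs.length = as.length → ψ.Wf →
    LEL (assigns xs as (impl (assigns xs as ψ) ψ))
  | [], [], ψ, _, w => lel_imp_self w
  | x :: xs, a :: as, ψ, hlen, w => by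
      have hlen' : xs.length = as.length := by simpa using hlen
      have wA' : (assigns xs as ψ).Wf := (wf_assigns xs as).mpr w
      have wA : (assigns (x :: xs) (a :: as) ψ).Wf := wA'
      -- SUB instance with x = y
      have s0 : LEL (Formula.assign x a (impl (Formula.assign x a (assigns xs as ψ))
          (subst x x (assigns xs as ψ)))) := LEL.sub wA' (adm_refl _)
      rw [subst_self] at s0
      -- s0 : LEL (assign x a (impl (assigns (x::xs) (a::as) ψ) (assigns xs as ψ)))
      set χ : Formula Ag Xv Pr :=
        impl (assigns (x :: xs) (a :: as) ψ) (assigns xs as ψ) with hχ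
      have wχ : χ.Wf := by simp [hχ, wA, wA']
      have hfv : ∀ y ∈ xs, y ∉ χ.FV := by
        intro y hy
        rw [hχ, fv_impl, fv_assigns _ _ hlen, fv_assigns _ _ hlen']
        simp [hy]
      have t1 : LEL (impl χ (assigns xs as χ)) := tr_lift xs as wχ hfv
      have s1 : LEL (Formula.assign x a (assigns xs as χ)) :=
        a_mp wχ ((wf_assigns xs as).mpr wχ) (LEL.necA t1) s0
      have ih : LEL (assigns xs as (impl (assigns xs as ψ) ψ)) := lel_self xs as hlen' w
      have s2 : LEL (Formula.assign x a (assigns xs as (impl (assigns xs as ψ) ψ))) :=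
        LEL.necA ih
      exact as_imp_trans (xs := x :: xs) (as := a :: as) wA wA' w s1 s2

end SimplicialEpistemic

namespace SimplicialEpistemic
open Formula
variable {Ag Xv Pr : Type} [DecidableEq Xv]

theorem as_contra2 {xs : List Xv} {as : List Ag} {P Q : Formula Ag Xv Pr}
    (wP : P.Wf) (wQ : Q.Wf) (h : LEL (assigns xs as (impl (neg P) Q))) :
    LEL (assigns xs as (impl (neg Q) P)) := by
  have t : LEL (impl (impl (neg P) Q) (impl (neg Q) P)) := by
    refine LEL.taut (by simp [wP, wQ]) fun v => ?_
    simp only [pe_impl, pe_neg]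
    cases propEval v P <;> cases propEval v Q <;> rfl
  exact as_mp (by simp [wP, wQ]) (by simp [wP, wQ]) (necAs xs as t) h

end SimplicialEpistemic

namespace SimplicialEpistemic

/-- the schemas R, KPI and ANI are theorems of LEL. -/
theorem lel_R_KPI_ANI
    {Ag Xv Pr : Type} [Fintype Ag] [Nonempty Ag] [DecidableEq Ag]
    [DecidableEq Xv] [Countable Xv] [Infinite Xv] [Countable Pr] :
    (∀ (x y : Xv) (a : Ag) (φ : Formula Ag Xv Pr),
        Formula.Wf φ → ¬ Formula.occurs y φ →
        LEL (Formula.fiff (.assign x a φ) (.assign y a (Formula.subst x y φ)))) ∧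
    (∀ (xs : List Xv) (as : List Ag) (α : Formula Ag Xv Pr),
        xs.Nodup → xs.length = as.length → Formula.Sent α →
        LEL (Formula.assigns xs as
          (Formula.impl (.know xs.toFinset α)
            (.know xs.toFinset (Formula.assigns xs as (.know xs.toFinset α)))))) ∧
    (∀ (x : Xv) (a : Ag) (p : Pr),
        LEL (.assign x a (Formula.impl (.neg (.atom p x))
          (.know {x} (.assign x a (.neg (.atom p x))))))) := by
  open Formula in
  refine ⟨?_, ?_, ?_⟩
  -- ### Schema R
  · intro x y a φ wφ hy
    have wsub : (subst x y φ).Wf := wf_subst wφ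
    -- direction 1 : [x:=a]φ → [y:=a]φ[y/x]
    have sub1 : LEL (.assign y a (impl (.assign x a φ) (subst x y φ))) :=
      LEL.sub wφ (adm_of_not_occurs hy)
    have d1 : LEL (impl (.assign y a (.assign x a φ)) (.assign y a (subst x y φ))) :=
      a_distrib (wf_assign.mpr wφ) wsub sub1
    have tr1 : LEL (impl (.assign x a φ) (.assign y a (.assign x a φ))) :=
      LEL.tr (wf_assign.mpr wφ)
        (fun h => not_occurs_fv hy (Finset.mem_sdiff.mp h).1)
    have dir1 : LEL (impl (.assign x a φ) (.assign y a (subst x y φ))) :=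
      lel_imp_trans (wf_assign.mpr wφ) (wf_assign.mpr (wf_assign.mpr wφ))
        (wf_assign.mpr wsub) tr1 d1
    -- direction 2 : [y:=a]φ[y/x] → [x:=a]φ
    have sub2 : LEL (.assign x a
        (impl (.assign y a (subst x y φ)) (subst y x (subst x y φ)))) :=
      LEL.sub wsub (adm_subst hy)
    rw [subst_subst hy] at sub2
    have d2 : LEL (impl (.assign x a (.assign y a (subst x y φ))) (.assign x a φ)) :=
      a_distrib (wf_assign.mpr wsub) wφ sub2
    have hx2 : x ∉ (Formula.assign y a (subst x y φ)).FV := by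
      simp only [fv_assign, Finset.mem_sdiff, Finset.mem_singleton]
      rintro ⟨h1, h2⟩
      by_cases hxy : x = y
      · exact h2 hxy
      · exact fv_subst_not_mem hxy h1
    have tr2 : LEL (impl (.assign y a (subst x y φ))
        (.assign x a (.assign y a (subst x y φ)))) :=
      LEL.tr (wf_assign.mpr wsub) hx2
    have dir2 : LEL (impl (.assign y a (subst x y φ)) (.assign x a φ)) :=
      lel_imp_trans (wf_assign.mpr wsub) (wf_assign.mpr (wf_assign.mpr wsub))
        (wf_assign.mpr wφ) tr2 d2
    exact lel_fiff (wf_assign.mpr wφ) (wf_assign.mpr wsub) dir1 dir2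
  -- ### Schema KPI
  · intro xs as α nodup hlen hα
    set Kα : Formula Ag Xv Pr := .know xs.toFinset α with hKα
    have wKα : Kα.Wf := wf_know.mpr ⟨hα.1, hα.2⟩
    set β : Formula Ag Xv Pr := Formula.assigns xs as (.neg Kα) with hβ
    have sβ : Sent β := sent_assigns hlen wKα (Finset.Subset.refl _)
    set Kβ : Formula Ag Xv Pr := .know xs.toFinset β with hKβ
    have wKβ : Kβ.Wf := wf_know.mpr ⟨sβ.1, sβ.2⟩
    -- inside the assignment context:  Kβ → β  (T) and  β → ¬Kα  (self-substitution)
    have c0a : LEL (assigns xs as (impl Kβ β)) := necAs xs as (LEL.tK sβ)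
    have c0b : LEL (assigns xs as (impl β (.neg Kα))) := lel_self xs as hlen wKα
    have c0 : LEL (assigns xs as (impl Kβ (.neg Kα))) :=
      as_imp_trans wKβ sβ.1 (show (Formula.neg Kα).Wf from wKα) c0a c0b
    have c1 : LEL (assigns xs as (impl Kα (.neg Kβ))) := as_contra1 wKβ wKα c0
    -- KNI applied to the sentence β
    have c2 : LEL (assigns xs as (impl (.neg Kβ)
        (.know xs.toFinset (assigns xs as (.neg Kβ))))) := LEL.kni sβ nodup hlen
    -- KNI applied to α, contraposed, distributed, lifted through K
    have c7pre : LEL (assigns xs as (impl (.neg Kα) Kβ)) := LEL.kni hα nodup hlen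
    have c7 : LEL (assigns xs as (impl (.neg Kβ) Kα)) := as_contra2 wKα wKβ c7pre
    have g8 : LEL (impl (assigns xs as (.neg Kβ)) (assigns xs as Kα)) :=
      (assigns_distrib xs as (show (Formula.neg Kβ).Wf from wKβ) wKα).mp c7
    have sAnKβ : Sent (assigns xs as (.neg Kβ)) :=
      sent_assigns hlen wKβ (Finset.Subset.refl _)
    have sAKα : Sent (assigns xs as Kα) :=
      sent_assigns hlen wKα (Finset.Subset.refl _)
    have g9 : LEL (impl (.know xs.toFinset (assigns xs as (.neg Kβ)))
        (.know xs.toFinset (assigns xs as Kα))) := k_imp sAnKβ sAKα g8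
    have c3 : LEL (assigns xs as (impl (.know xs.toFinset (assigns xs as (.neg Kβ)))
        (.know xs.toFinset (assigns xs as Kα)))) := necAs xs as g9
    have c12 : LEL (assigns xs as (impl Kα
        (.know xs.toFinset (assigns xs as (.neg Kβ))))) :=
      as_imp_trans wKα (show (Formula.neg Kβ).Wf from wKβ) (wf_know.mpr ⟨sAnKβ.1, sAnKβ.2⟩) c1 c2
    exact as_imp_trans wKα (wf_know.mpr ⟨sAnKβ.1, sAnKβ.2⟩)
      (wf_know.mpr ⟨sAKα.1, sAKα.2⟩) c12 c3
  -- ### Schema ANI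
  · intro x a p
    set q : Formula Ag Xv Pr := .atom p x with hq
    set α₁ : Formula Ag Xv Pr := .assign x a q with hα₁
    have sα₁ : Sent α₁ := ⟨trivial, by simp [hα₁, hq]⟩
    have wK1α : (Formula.know {x} α₁ : Formula Ag Xv Pr).Wf := wf_know.mpr ⟨sα₁.1, sα₁.2⟩
    -- inside [x:=a] : [x:=a]q → q
    have cL : LEL (.assign x a (impl α₁ q)) := by
      have h := LEL.sub (x := x) (y := x) (a := a) (φ := q) trivial (adm_refl q)
      rwa [subst_self] at h
    have c_a : LEL (.assign x a (impl (.neg q) (.neg α₁))) :=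
      as_contra (xs := [x]) (as := [a]) sα₁.1 trivial cL
    -- ¬α₁ → ¬K α₁  (contrapositive of T)
    have c_b : LEL (.assign x a (impl (.neg α₁) (.neg (.know {x} α₁)))) :=
      LEL.necA (lel_contra wK1α sα₁.1 (LEL.tK (Xs := ({x} : Finset Xv)) sα₁))
    -- KNI for the single assignment
    have c_c : LEL (.assign x a (impl (.neg (.know {x} α₁))
        (.know {x} (.assign x a (.neg (.know {x} α₁)))))) := by
      have h := LEL.kni (xs := [x]) (as := [a]) (α := α₁) sα₁
        (List.nodup_singleton x) rfl
      simpa [assigns] using h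
    -- global:  K[x:=a]¬Kα₁ → K[x:=a]¬q  via API
    have api : LEL (.assign x a (impl q (.know {x} α₁))) := LEL.api
    have step2 : LEL (.assign x a (impl (.neg (.know {x} α₁)) (.neg q))) :=
      as_contra (xs := [x]) (as := [a]) trivial wK1α api
    have sInner : Sent (.assign x a (impl (.neg (.know {x} α₁)) (.neg q))) :=
      ⟨show ((α₁.Wf ∧ α₁.FV = ∅) ∧ True) from ⟨⟨sα₁.1, sα₁.2⟩, trivial⟩, by simp [hq]⟩
    have sP' : Sent (.assign x a (.neg (.know {x} α₁))) := ⟨by simpa using wK1α, by simp⟩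
    have sQ' : Sent (.assign x a (.neg q)) := ⟨trivial, by simp [hq]⟩
    have hK0 : LEL (.know (∅ : Finset Xv)
        (.assign x a (impl (.neg (.know {x} α₁)) (.neg q)))) := LEL.necK sInner step2
    have hK1 : LEL (.know {x} (.assign x a (impl (.neg (.know {x} α₁)) (.neg q)))) :=
      (LEL.mono (Finset.empty_subset _) sInner).mp hK0
    have g1 : LEL (impl (.assign x a (impl (.neg (.know {x} α₁)) (.neg q)))
        (impl (.assign x a (.neg (.know {x} α₁))) (.assign x a (.neg q)))) :=
      LEL.kasgn (show (Formula.neg (Formula.know {x} α₁) : Formula Ag Xv Pr).Wf from ⟨sα₁.1, sα₁.2⟩) (show (Formula.neg q).Wf from trivial)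
    have g3 : LEL (.know {x} (impl (.assign x a (.neg (.know {x} α₁)))
        (.assign x a (.neg q)))) :=
      (k_imp sInner (sent_impl sP' sQ') g1).mp hK1
    have g4 : LEL (impl (.know {x} (.assign x a (.neg (.know {x} α₁))))
        (.know {x} (.assign x a (.neg q)))) := (LEL.kk sP' sQ').mp g3
    -- chain everything inside [x:=a]
    have d1 : LEL (.assign x a (impl (.neg q) (.neg (.know {x} α₁)))) :=
      as_imp_trans (xs := [x]) (as := [a]) (show (Formula.neg q).Wf from trivial) (show (Formula.neg α₁).Wf from sα₁.1) (show (Formula.neg (Formula.know {x} α₁) : Formula Ag Xv Pr).Wf from wK1α) c_a c_b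
    have d2 : LEL (.assign x a (impl (.neg q)
        (.know {x} (.assign x a (.neg (.know {x} α₁)))))) :=
      as_imp_trans (xs := [x]) (as := [a]) (show (Formula.neg q).Wf from trivial)
        (show (Formula.neg (Formula.know {x} α₁) : Formula Ag Xv Pr).Wf from wK1α)
        (wf_know.mpr ⟨sP'.1, sP'.2⟩) d1 c_c
    exact as_imp_trans (xs := [x]) (as := [a]) (show (Formula.neg q).Wf from trivial)
      (wf_know.mpr ⟨sP'.1, sP'.2⟩) (wf_know.mpr ⟨sQ'.1, sQ'.2⟩) d2 (LEL.necA g4)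

end SimplicialEpistemic
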